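/- Let p ≥ 5 be a prime and let f = y²z − x³ ∈ F_p[x,y,z]. Then I_1(f^{p−1}) = I_2(f^{p²−1}) = (x,y), the ideal generated by x and y. In particular, f has level two. -/

import Mathlib

open MvPolynomial

/-- `J^[q]`: the ideal generated by the `q`-th powers of the elements of `J`. -/
def bracketPow {R : Type*} [CommRing R] (q : ℕ) (J : Ideal R) : Ideal R :=
  Ideal.span ((fun a => a ^ q) '' (J : Set R))

/-- `I_e(g)` (for the prime `p`): the smallest ideal `J` with `g ∈ J^[p^e]`. -/
def rootIdeal {R : Type*} [CommRing R] (p e : ℕ) (g : R) : Ideal R :=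
  sInf {J : Ideal R | g ∈ bracketPow (p ^ e) J}

/-- `f` has level `e`: `e` is the least integer `≥ 1` such that
`f^(p^e - p) ∈ (I_e(f^(p^e - 1)))^[p^e]`. -/
def HasLevel {R : Type*} [CommRing R] (p : ℕ) (f : R) (e : ℕ) : Prop :=
  IsLeast {e' : ℕ | 1 ≤ e' ∧
    f ^ (p ^ e' - p) ∈ bracketPow (p ^ e') (rootIdeal p e' (f ^ (p ^ e' - 1)))} e



set_option maxHeartbeats 1000000

section Aux

variable {p : ℕ} [Fact p.Prime]

variable {p : ℕ} [Fact p.Prime]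

lemma smulAdd_inj {q : ℕ} (hq : 0 < q) (a : Fin 3 →₀ ℕ) :
    Function.Injective (fun m : Fin 3 →₀ ℕ => q • m + a) := by
  intro m m' h
  ext i
  have := congrArg (fun z : Fin 3 →₀ ℕ => z i) h
  simp only [Finsupp.add_apply, Finsupp.smul_apply, smul_eq_mul] at this
  exact Nat.eq_of_mul_eq_mul_left hq (by omega)

noncomputable def phi (q : ℕ) (hq : 0 < q) (a : Fin 3 →₀ ℕ)
    (h : MvPolynomial (Fin 3) (ZMod p)) : MvPolynomial (Fin 3) (ZMod p) :=
  AddMonoidAlgebra.ofCoeff (Finsupp.comapDomain (fun m => q • m + a) (AddMonoidAlgebra.coeff h) ((smulAdd_inj hq a).injOn))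

lemma coeff_phi {q : ℕ} (hq : 0 < q) (a : Fin 3 →₀ ℕ) (h : MvPolynomial (Fin 3) (ZMod p))
    (m : Fin 3 →₀ ℕ) : coeff m (phi q hq a h) = coeff (q • m + a) h := rfl

lemma phi_add {q : ℕ} (hq : 0 < q) (a : Fin 3 →₀ ℕ) (h₁ h₂ : MvPolynomial (Fin 3) (ZMod p)) :
    phi q hq a (h₁ + h₂) = phi q hq a h₁ + phi q hq a h₂ := by
  apply MvPolynomial.ext
  intro m
  rw [coeff_add, coeff_phi, coeff_phi, coeff_phi, coeff_add]

lemma phi_zero {q : ℕ} (hq : 0 < q) (a : Fin 3 →₀ ℕ) :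
    phi q hq a (0 : MvPolynomial (Fin 3) (ZMod p)) = 0 := by
  apply MvPolynomial.ext
  intro m
  rw [coeff_phi, coeff_zero, coeff_zero]

noncomputable def phiHom (q : ℕ) (hq : 0 < q) (a : Fin 3 →₀ ℕ) :
    MvPolynomial (Fin 3) (ZMod p) →+ MvPolynomial (Fin 3) (ZMod p) :=
  AddMonoidHom.mk' (phi q hq a) (phi_add hq a)

lemma phi_mul_monomial {q : ℕ} (hq : 0 < q) {a : Fin 3 →₀ ℕ} (ha : ∀ i, a i < q)
    (w : MvPolynomial (Fin 3) (ZMod p)) (s : Fin 3 →₀ ℕ) (c : ZMod p) :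
    phi q hq a (w * monomial (q • s) c) = phi q hq a w * monomial s c := by
  apply MvPolynomial.ext
  intro m
  rw [coeff_phi, coeff_mul_monomial', coeff_mul_monomial']
  have hle : q • s ≤ q • m + a ↔ s ≤ m := by
    rw [Finsupp.le_def, Finsupp.le_def]
    constructor
    · intro h i
      have h1 := h i
      have h2 := ha i
      simp only [Finsupp.add_apply, Finsupp.smul_apply, smul_eq_mul] at h1
      nlinarith [h1, h2]
    · intro h i
      have h1 := h i
      simp only [Finsupp.add_apply, Finsupp.smul_apply, smul_eq_mul]
      nlinarith [h1]
  split_ifs with h1 h2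
  · rw [coeff_phi]
    have he : q • m + a - q • s = q • (m - s) + a := by
      ext i
      have h1 : s i ≤ m i := h2 i
      simp only [Finsupp.add_apply, Finsupp.smul_apply, Finsupp.tsub_apply, smul_eq_mul]
      have := ha i
      have h3 : q * s i ≤ q * m i := Nat.mul_le_mul_left q h1
      have h4 : q * (m i - s i) = q * m i - q * s i := Nat.mul_sub ..
      omega
    rw [he]
  · exact absurd (hle.1 h1) h2
  · exact absurd (hle.2 (by assumption)) h1
  · rfl

lemma zmod_pow_pow (n : ℕ) (c : ZMod p) : c ^ p ^ n = c := by
  induction n with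
  | zero => simp
  | succ n ih => rw [pow_succ, pow_mul, ih, ZMod.pow_card]

lemma phi_mul_pow (n : ℕ) (hq : 0 < p ^ n) {a : Fin 3 →₀ ℕ} (ha : ∀ i, a i < p ^ n)
    (v u : MvPolynomial (Fin 3) (ZMod p)) :
    phi (p ^ n) hq a (v * u ^ p ^ n) = phi (p ^ n) hq a v * u := by
  induction u using MvPolynomial.induction_on' with
  | monomial s c =>
    rw [monomial_pow, zmod_pow_pow, phi_mul_monomial hq ha]
  | add u1 u2 ih1 ih2 =>
    rw [add_pow_char_pow, mul_add, phi_add, ih1, ih2, mul_add]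

/-- key minimality step: the `a`-component of anything in `J^[p^n]` lies in `J`. -/
lemma phi_mem (n : ℕ) (hq : 0 < p ^ n) {a : Fin 3 →₀ ℕ} (ha : ∀ i, a i < p ^ n)
    {J : Ideal (MvPolynomial (Fin 3) (ZMod p))} {g : MvPolynomial (Fin 3) (ZMod p)}
    (hg : g ∈ bracketPow (p ^ n) J) : phi (p ^ n) hq a g ∈ J := by
  have key : ∀ r : MvPolynomial (Fin 3) (ZMod p), phi (p ^ n) hq a (r * g) ∈ J := by
    refine Submodule.span_induction
      (p := fun h _ => ∀ r : MvPolynomial (Fin 3) (ZMod p), phi (p ^ n) hq a (r * h) ∈ J)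
      ?_ ?_ ?_ ?_ hg
    · rintro x ⟨j, hj, rfl⟩ r
      rw [phi_mul_pow n hq ha]
      exact Ideal.mul_mem_left J _ hj
    · intro r
      rw [mul_zero, phi_zero]
      exact J.zero_mem
    · intro x y _ _ hx hy r
      rw [mul_add, phi_add]
      exact J.add_mem (hx r) (hy r)
    · intro c x _ hx r
      rw [smul_eq_mul, ← mul_assoc]
      exact hx (r * c)
  simpa using key 1

/-- exponent triple as a `Finsupp`. -/
noncomputable def trip (A B C : ℕ) : Fin 3 →₀ ℕ :=
  Finsupp.single 0 A + Finsupp.single 1 B + Finsupp.single 2 C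

lemma trip_apply0 (A B C : ℕ) : trip A B C 0 = A := by
  simp [trip, Finsupp.single_apply]

lemma trip_apply1 (A B C : ℕ) : trip A B C 1 = B := by
  simp [trip, Finsupp.single_apply]

lemma trip_apply2 (A B C : ℕ) : trip A B C 2 = C := by
  simp [trip, Finsupp.single_apply]

lemma term_eq (k j : ℕ) :
    ((X 1 : MvPolynomial (Fin 3) (ZMod p)) ^ 2 * X 2) ^ k * ((X 0) ^ 3) ^ j
      = monomial (trip (3 * j) (2 * k) k) 1 := by
  rw [mul_pow, ← pow_mul, ← pow_mul, X_pow_eq_monomial, X_pow_eq_monomial, X_pow_eq_monomial,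
    monomial_mul, monomial_mul, one_mul, one_mul]
  congr 1
  rw [trip]
  abel

lemma f_ne_zero : ((X 1 : MvPolynomial (Fin 3) (ZMod p)) ^ 2 * X 2 - (X 0) ^ 3) ≠ 0 := by
  intro h
  have h0 := congrArg (eval (fun i : Fin 3 => if i = 0 then (1 : ZMod p) else 0)) h
  simp at h0

/-- `f^(q-1)` as an explicit sum of monomials, `q = p^n`. -/
lemma f_pow_eq (n : ℕ) (hn : 1 ≤ n) :
    ((X 1 : MvPolynomial (Fin 3) (ZMod p)) ^ 2 * X 2 - (X 0) ^ 3) ^ (p ^ n - 1)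
      = ∑ k ∈ Finset.range (p ^ n),
          monomial (trip (3 * (p ^ n - 1 - k)) (2 * k) k) 1 := by
  set q := p ^ n with hqdef
  have hq1 : 0 < q := Nat.pow_pos (n := n) (Fact.out : p.Prime).pos
  set f : MvPolynomial (Fin 3) (ZMod p) := X 1 ^ 2 * X 2 - X 0 ^ 3 with hfdef
  have key : (∑ k ∈ Finset.range q, monomial (trip (3 * (q - 1 - k)) (2 * k) k)
      (1 : ZMod p)) * f = f ^ q := by
    have hg := geom_sum₂_mul ((X 1 : MvPolynomial (Fin 3) (ZMod p)) ^ 2 * X 2) ((X 0) ^ 3) q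
    have hsum : ∀ k ∈ Finset.range q,
        ((X 1 : MvPolynomial (Fin 3) (ZMod p)) ^ 2 * X 2) ^ k * ((X 0) ^ 3) ^ (q - 1 - k)
          = monomial (trip (3 * (q - 1 - k)) (2 * k) k) 1 := fun k _ => term_eq k _
    rw [Finset.sum_congr rfl hsum] at hg
    rw [hg, hfdef, sub_pow_char_pow]
  have hfq : f ^ q = f ^ (q - 1) * f := by
    rw [← pow_succ]
    congr 1
    omega
  rw [hfq] at key
  exact (mul_right_cancel₀ f_ne_zero key).symm

lemma monomial_factor {d : Fin 3 →₀ ℕ} {i : Fin 3} {q : ℕ} (h : q ≤ d i) :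
    (monomial d 1 : MvPolynomial (Fin 3) (ZMod p))
      = X i ^ q * monomial (d - Finsupp.single i q) 1 := by
  have hd : Finsupp.single i q + (d - Finsupp.single i q) = d := by
    ext j
    rw [Finsupp.add_apply, Finsupp.tsub_apply, Finsupp.single_apply]
    by_cases hij : i = j
    · subst hij
      rw [if_pos rfl]
      omega
    · rw [if_neg hij]
      omega
  rw [X_pow_eq_monomial, monomial_mul, one_mul, hd]

lemma gq_mem (q : ℕ) (hq : 2 ≤ q) :
    (∑ k ∈ Finset.range q, monomial (trip (3 * (q - 1 - k)) (2 * k) k) (1 : ZMod p))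
      ∈ Ideal.span {(X 0 : MvPolynomial (Fin 3) (ZMod p)) ^ q, (X 1) ^ q} := by
  refine Submodule.sum_mem _ fun k hk => ?_
  rw [Finset.mem_range] at hk
  by_cases hc : q ≤ 3 * (q - 1 - k)
  · have h0 : q ≤ trip (3 * (q - 1 - k)) (2 * k) k 0 := by rw [trip_apply0]; exact hc
    rw [monomial_factor h0]
    exact Ideal.mul_mem_right _ _ (Ideal.subset_span (Set.mem_insert _ _))
  · have hc2 : q ≤ 2 * k := by omega
    have h1 : q ≤ trip (3 * (q - 1 - k)) (2 * k) k 1 := by rw [trip_apply1]; exact hc2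
    rw [monomial_factor h1]
    exact Ideal.mul_mem_right _ _ (Ideal.subset_span (Set.mem_insert_of_mem _ rfl))

lemma phi_monomial_eq_zero {q : ℕ} (hq : 0 < q) {a d : Fin 3 →₀ ℕ}
    (h : ∀ m : Fin 3 →₀ ℕ, q • m + a ≠ d) (c : ZMod p) :
    phi q hq a (monomial d c) = 0 := by
  apply MvPolynomial.ext
  intro m
  rw [coeff_phi, coeff_monomial, coeff_zero, if_neg fun hc => h m hc.symm]

lemma phi_monomial_eq {q : ℕ} (hq : 0 < q) {a d m0 : Fin 3 →₀ ℕ}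
    (h : q • m0 + a = d) (c : ZMod p) :
    phi q hq a (monomial d c) = monomial m0 c := by
  apply MvPolynomial.ext
  intro m
  rw [coeff_phi, coeff_monomial, coeff_monomial]
  split_ifs with h1 h2 h3
  · rfl
  · exact absurd (smulAdd_inj hq a (h.trans h1)) h2
  · exact absurd (h3 ▸ h).symm h1
  · rfl

lemma phi_gq_x {q : ℕ} (hq5 : 5 ≤ q) (hodd : q % 2 = 1) (hq : 0 < q) :
    phi q hq (trip ((q - 3) / 2) (q - 1) ((q - 1) / 2))
        (∑ k ∈ Finset.range q, monomial (trip (3 * (q - 1 - k)) (2 * k) k) (1 : ZMod p))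
      = X 0 := by
  set a : Fin 3 →₀ ℕ := trip ((q - 3) / 2) (q - 1) ((q - 1) / 2) with hadef
  have hmap : phi q hq a (∑ k ∈ Finset.range q, monomial (trip (3 * (q - 1 - k)) (2 * k) k)
      (1 : ZMod p)) = ∑ k ∈ Finset.range q,
        phi q hq a (monomial (trip (3 * (q - 1 - k)) (2 * k) k) (1 : ZMod p)) :=
    map_sum (phiHom q hq a) _ _
  rw [hmap, Finset.sum_eq_single_of_mem ((q - 1) / 2) (Finset.mem_range.2 (by omega))]
  · have hm : q • (Finsupp.single (0 : Fin 3) 1) + a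
        = trip (3 * (q - 1 - (q - 1) / 2)) (2 * ((q - 1) / 2)) ((q - 1) / 2) := by
      ext i
      rw [Finsupp.add_apply, Finsupp.smul_apply, smul_eq_mul]
      fin_cases i <;>
        simp [hadef, trip, Finsupp.add_apply, Finsupp.single_apply] <;>
        omega
    rw [phi_monomial_eq hq hm, ← X_pow_eq_monomial, pow_one]
  · intro k hk hne
    rw [Finset.mem_range] at hk
    refine phi_monomial_eq_zero hq (fun m heq => ?_) 1
    have h2 := congrArg (fun z : Fin 3 →₀ ℕ => z 2) heq
    simp [hadef, trip, Finsupp.add_apply, Finsupp.smul_apply, smul_eq_mul,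
      Finsupp.single_apply] at h2
    rcases Nat.eq_zero_or_pos (m 2) with h0 | hpos
    · rw [h0, Nat.mul_zero] at h2
      omega
    · have : q ≤ q * m 2 := Nat.le_mul_of_pos_right q hpos
      omega

lemma phi_gq_y {q : ℕ} (hq5 : 5 ≤ q) (hq : 0 < q) :
    phi q hq (trip 0 (q - 2) (q - 1))
        (∑ k ∈ Finset.range q, monomial (trip (3 * (q - 1 - k)) (2 * k) k) (1 : ZMod p))
      = X 1 := by
  set a : Fin 3 →₀ ℕ := trip 0 (q - 2) (q - 1) with hadef
  have hmap : phi q hq a (∑ k ∈ Finset.range q, monomial (trip (3 * (q - 1 - k)) (2 * k) k)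
      (1 : ZMod p)) = ∑ k ∈ Finset.range q,
        phi q hq a (monomial (trip (3 * (q - 1 - k)) (2 * k) k) (1 : ZMod p)) :=
    map_sum (phiHom q hq a) _ _
  rw [hmap, Finset.sum_eq_single_of_mem (q - 1) (Finset.mem_range.2 (by omega))]
  · have hm : q • (Finsupp.single (1 : Fin 3) 1) + a
        = trip (3 * (q - 1 - (q - 1))) (2 * (q - 1)) (q - 1) := by
      ext i
      rw [Finsupp.add_apply, Finsupp.smul_apply, smul_eq_mul]
      fin_cases i <;>
        simp [hadef, trip, Finsupp.add_apply, Finsupp.single_apply] <;>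
        omega
    rw [phi_monomial_eq hq hm, ← X_pow_eq_monomial, pow_one]
  · intro k hk hne
    rw [Finset.mem_range] at hk
    refine phi_monomial_eq_zero hq (fun m heq => ?_) 1
    have h2 := congrArg (fun z : Fin 3 →₀ ℕ => z 2) heq
    simp [hadef, trip, Finsupp.add_apply, Finsupp.smul_apply, smul_eq_mul,
      Finsupp.single_apply] at h2
    rcases Nat.eq_zero_or_pos (m 2) with h0 | hpos
    · rw [h0, Nat.mul_zero] at h2
      omega
    · have : q ≤ q * m 2 := Nat.le_mul_of_pos_right q hpos
      omega


variable {p : ℕ} [Fact p.Prime]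

lemma pow_mem_bracketPow {R : Type*} [CommRing R] {J : Ideal R} {x : R} (q : ℕ) (h : x ∈ J) :
    x ^ q ∈ bracketPow q J :=
  Ideal.subset_span ⟨x, h, rfl⟩

lemma bracketPow_le_self {R : Type*} [CommRing R] {q : ℕ} (hq : 0 < q) (J : Ideal R) :
    bracketPow q J ≤ J := by
  rw [bracketPow, Ideal.span_le]
  rintro _ ⟨x, hx, rfl⟩
  exact Ideal.pow_mem_of_mem J hx q hq

lemma span_pow_le (q : ℕ) :
    Ideal.span {(X 0 : MvPolynomial (Fin 3) (ZMod p)) ^ q, (X 1) ^ q}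
      ≤ bracketPow q (Ideal.span {(X 0 : MvPolynomial (Fin 3) (ZMod p)), X 1}) := by
  rw [Ideal.span_le]
  rintro z (rfl | rfl)
  · exact pow_mem_bracketPow q (Ideal.subset_span (Set.mem_insert _ _))
  · exact pow_mem_bracketPow q (Ideal.subset_span (Set.mem_insert_of_mem _ rfl))

lemma one_not_mem :
    (1 : MvPolynomial (Fin 3) (ZMod p)) ∉ Ideal.span {(X 0 : MvPolynomial (Fin 3) (ZMod p)), X 1} := by
  intro h
  obtain ⟨a, b, hab⟩ := Ideal.mem_span_pair.1 h
  have := congrArg constantCoeff hab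
  simp at this

lemma ha0_lt {q : ℕ} (hq5 : 5 ≤ q) : ∀ i : Fin 3, trip ((q - 3) / 2) (q - 1) ((q - 1) / 2) i < q := by
  intro i
  fin_cases i <;> simp [trip, Finsupp.single_apply] <;> omega

lemma ha1_lt {q : ℕ} (hq5 : 5 ≤ q) : ∀ i : Fin 3, trip 0 (q - 2) (q - 1) i < q := by
  intro i
  fin_cases i <;> simp [trip, Finsupp.single_apply] <;> omega

lemma root_eq (hp5 : 5 ≤ p) (n : ℕ) (hn : 1 ≤ n) :
    rootIdeal p n (((X 1 : MvPolynomial (Fin 3) (ZMod p)) ^ 2 * X 2 - (X 0) ^ 3) ^ (p ^ n - 1))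
      = Ideal.span {(X 0 : MvPolynomial (Fin 3) (ZMod p)), X 1} := by
  set q := p ^ n with hqdef
  have hq5 : 5 ≤ q := le_trans hp5 (Nat.le_self_pow (by omega) p)
  have hq : 0 < q := by omega
  have hodd : q % 2 = 1 := by
    rw [Nat.odd_iff.symm] at *
    exact Odd.pow ((Fact.out : p.Prime).odd_of_ne_two (by omega))
  apply le_antisymm
  · apply sInf_le
    show _ ∈ bracketPow q (Ideal.span {(X 0 : MvPolynomial (Fin 3) (ZMod p)), X 1})
    rw [f_pow_eq n hn]
    exact span_pow_le q (gq_mem q (by omega))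
  · refine le_sInf fun J hJ => ?_
    rw [Ideal.span_le]
    rintro z (rfl | rfl)
    · have h1 := phi_mem n hq (ha0_lt hq5) hJ
      rw [f_pow_eq n hn, phi_gq_x hq5 hodd] at h1
      exact h1
    · have h1 := phi_mem n hq (ha1_lt hq5) hJ
      rw [f_pow_eq n hn, phi_gq_y hq5] at h1
      exact h1


end Aux

/-- Let `p ≥ 5` be prime and `f = y²z - x³ ∈ 𝔽_p[x,y,z]`. Then
`I_1(f^(p-1)) = I_2(f^(p²-1)) = (x, y)`; in particular `f` has level two. -/
theorem stmt_4 (p : ℕ) [Fact p.Prime] (hp5 : 5 ≤ p)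
    (f : MvPolynomial (Fin 3) (ZMod p))
    (hf : f = (X 1) ^ 2 * X 2 - (X 0) ^ 3) :
    rootIdeal p 1 (f ^ (p - 1)) = Ideal.span {X 0, X 1} ∧
    rootIdeal p 2 (f ^ (p ^ 2 - 1)) = Ideal.span {X 0, X 1} ∧
    HasLevel p f 2 := by
  subst hf
  have hppos : 0 < p := by omega
  have h1 : rootIdeal p 1 (((X 1 : MvPolynomial (Fin 3) (ZMod p)) ^ 2 * X 2 - (X 0) ^ 3) ^ (p - 1))
      = Ideal.span {(X 0 : MvPolynomial (Fin 3) (ZMod p)), X 1} := by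
    have := root_eq hp5 1 le_rfl
    rwa [pow_one] at this
  have h2 := root_eq hp5 2 (by omega)
  refine ⟨h1, h2, ?_, ?_⟩
  · -- 2 is in the set
    refine ⟨by omega, ?_⟩
    rw [h2]
    -- f ^ (p^2 - p) ∈ bracketPow (p^2) (span {X0, X1})
    have hfp : ((X 1 : MvPolynomial (Fin 3) (ZMod p)) ^ 2 * X 2 - (X 0) ^ 3) ^ (p - 1)
        ∈ Ideal.span {(X 0 : MvPolynomial (Fin 3) (ZMod p)) ^ p, (X 1) ^ p} := by
      have := f_pow_eq (p := p) 1 le_rfl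
      rw [pow_one] at this
      rw [this]
      exact gq_mem p (by omega)
    obtain ⟨u, v, huv⟩ := Ideal.mem_span_pair.1 hfp
    have hexp : ((X 1 : MvPolynomial (Fin 3) (ZMod p)) ^ 2 * X 2 - (X 0) ^ 3) ^ (p ^ 2 - p)
        = u ^ p * (X 0) ^ (p ^ 2) + v ^ p * (X 1) ^ (p ^ 2) := by
      have e1 : p ^ 2 - p = (p - 1) * p := by
        rw [Nat.sub_mul, one_mul, pow_two]
      rw [e1, pow_mul, ← huv, add_pow_char, mul_pow, mul_pow, ← pow_mul, ← pow_mul, ← pow_two]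
    rw [hexp]
    exact Ideal.add_mem _
      (Ideal.mul_mem_left _ _ (pow_mem_bracketPow _ (Ideal.subset_span (Set.mem_insert _ _))))
      (Ideal.mul_mem_left _ _ (pow_mem_bracketPow _
        (Ideal.subset_span (Set.mem_insert_of_mem _ rfl))))
  · -- lower bound
    rintro e' ⟨he1, hm⟩
    by_contra hlt
    have he : e' = 1 := by omega
    subst he
    rw [pow_one, Nat.sub_self, pow_zero, h1] at hm
    exact one_not_mem (bracketPow_le_self hppos _ hm)
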